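/- Merging lemma for default logic: Let D be a set of defaults and let p, x be variables with p not occurring in D. Define T = ⟨{(: x∧p / x∧p), (: ¬x∧p / ¬x∧p)} ∪ {(p∧α : β / γ) | (α : β / γ) ∈ D}, ∅⟩. Then the extensions of T are exactly the extensions of ⟨D|_{x=true}, ∅⟩ with x and p added to each, together with the extensions of ⟨D|_{x=false}, ∅⟩ with ¬x and p added to each. -/

import Mathlib

/-- Propositional formulas over variables indexed by `Nat`. -/
inductive Fm where
  | var : Nat → Fm
  | tru : Fm
  | fls : Fm
  | neg : Fm → Fm
  | conj : Fm → Fm → Fm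
  | disj : Fm → Fm → Fm
deriving DecidableEq

/-- Evaluation of a formula under an assignment. -/
def Fm.eval (σ : Nat → Bool) : Fm → Bool
  | .var n => σ n
  | .tru => true
  | .fls => false
  | .neg F => !(F.eval σ)
  | .conj F G => F.eval σ && G.eval σ
  | .disj F G => F.eval σ || G.eval σ

/-- `F.subst x v` replaces every occurrence of variable `x` by the constant `v`. -/
def Fm.subst (x : Nat) (v : Bool) : Fm → Fm
  | .var n => if n = x then (if v then .tru else .fls) else .var n
  | .tru => .tru
  | .fls => .fls
  | .neg F => .neg (F.subst x v)
  | .conj F G => .conj (F.subst x v) (G.subst x v)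
  | .disj F G => .disj (F.subst x v) (G.subst x v)

/-- `F.occurs x` : variable `x` occurs in `F`. -/
def Fm.occurs (x : Nat) : Fm → Prop
  | .var n => n = x
  | .tru => False
  | .fls => False
  | .neg F => F.occurs x
  | .conj F G => F.occurs x ∨ G.occurs x
  | .disj F G => F.occurs x ∨ G.occurs x

/-- Propositional entailment from a set of formulas. -/
def Entails (S : Set Fm) (f : Fm) : Prop :=
  ∀ σ : Nat → Bool, (∀ g ∈ S, g.eval σ = true) → f.eval σ = true

/-- Deductive closure. -/
def Th (S : Set Fm) : Set Fm := {f | Entails S f}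

/-- A default `α : β / γ` with precondition `α`, justification `β`, consequence `γ`. -/
structure Default where
  pre : Fm
  jus : Fm
  con : Fm

/-- `G` is closed for the Reiter operator relative to candidate extension `E`:
it contains `W`, is deductively closed, and applies every default of `D` whose
precondition is in `G` and whose justification is consistent with `E`. -/
def DLClosed (D : Set Default) (W : Set Fm) (E : Set Fm) (G : Set Fm) : Prop :=
  W ⊆ G ∧ (∀ f, Entails G f → f ∈ G) ∧
    ∀ d ∈ D, d.pre ∈ G → (Fm.neg d.jus) ∉ E → d.con ∈ G

/-- Reiter extension: `E` is the least set closed for the operator relative to `E` itself. -/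
def IsExtension (D : Set Default) (W : Set Fm) (E : Set Fm) : Prop :=
  E = ⋂₀ {G | DLClosed D W E G}

/-- Skeptical entailment: `φ` belongs to every extension. -/
def Skeptical (D : Set Default) (W : Set Fm) (φ : Fm) : Prop :=
  ∀ E, IsExtension D W E → φ ∈ E

/-- Substitution applied throughout a default. -/
def Default.subst (x : Nat) (v : Bool) (d : Default) : Default :=
  ⟨d.pre.subst x v, d.jus.subst x v, d.con.subst x v⟩

/-- `x` occurs in a default. -/
def Default.occurs (x : Nat) (d : Default) : Prop :=
  d.pre.occurs x ∨ d.jus.occurs x ∨ d.con.occurs x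

/-- The merged default theory of the raising construction:
`{(: x∧p / x∧p), (: ¬x∧p / ¬x∧p)} ∪ {(p∧α : β / γ) | (α:β/γ) ∈ D}`. -/
def mergedD (D : Set Default) (x p : Nat) : Set Default :=
  {⟨.tru, .conj (.var x) (.var p), .conj (.var x) (.var p)⟩,
   ⟨.tru, .conj (.neg (.var x)) (.var p), .conj (.neg (.var x)) (.var p)⟩} ∪
  (fun d => Default.mk (.conj (.var p) d.pre) d.jus d.con) '' D


/-! ### Auxiliary lemmas -/

section Aux

lemma Fm.eval_subst (x : Nat) (v : Bool) (f : Fm) (σ : Nat → Bool) :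
    (f.subst x v).eval σ = f.eval (fun n => if n = x then v else σ n) := by
  induction f with
  | var n =>
      simp only [Fm.subst, Fm.eval]
      split
      · cases v <;> simp [Fm.eval]
      · simp [Fm.eval]
  | tru => rfl
  | fls => rfl
  | neg F ih => simp [Fm.subst, Fm.eval, ih]
  | conj F G ihF ihG => simp [Fm.subst, Fm.eval, ihF, ihG]
  | disj F G ihF ihG => simp [Fm.subst, Fm.eval, ihF, ihG]

lemma Fm.eval_congr (f : Fm) {σ τ : Nat → Bool} (h : ∀ n, f.occurs n → σ n = τ n) :
    f.eval σ = f.eval τ := by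
  induction f with
  | var n => exact h n rfl
  | tru => rfl
  | fls => rfl
  | neg F ih => simp only [Fm.eval]; rw [ih h]
  | conj F G ihF ihG =>
      simp only [Fm.eval]
      rw [ihF (fun n hn => h n (Or.inl hn)), ihG (fun n hn => h n (Or.inr hn))]
  | disj F G ihF ihG =>
      simp only [Fm.eval]
      rw [ihF (fun n hn => h n (Or.inl hn)), ihG (fun n hn => h n (Or.inr hn))]

lemma Fm.subst_of_not_occurs {y : Nat} {f : Fm} (h : ¬ f.occurs y) (v : Bool) :
    f.subst y v = f := by
  induction f with
  | var n =>
      simp only [Fm.occurs] at h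
      simp [Fm.subst, h]
  | tru => rfl
  | fls => rfl
  | neg F ih => simp only [Fm.occurs] at h; simp [Fm.subst, ih h]
  | conj F G ihF ihG =>
      simp only [Fm.occurs] at h
      push_neg at h
      simp [Fm.subst, ihF h.1, ihG h.2]
  | disj F G ihF ihG =>
      simp only [Fm.occurs] at h
      push_neg at h
      simp [Fm.subst, ihF h.1, ihG h.2]

lemma Fm.not_occurs_subst_self (x : Nat) (v : Bool) (f : Fm) :
    ¬ (f.subst x v).occurs x := by
  induction f with
  | var n =>
      simp only [Fm.subst]
      split
      · cases v <;> simp [Fm.occurs]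
      · simpa [Fm.occurs] using ‹¬ n = x›
  | tru => simp [Fm.subst, Fm.occurs]
  | fls => simp [Fm.subst, Fm.occurs]
  | neg F ih => simpa [Fm.subst, Fm.occurs] using ih
  | conj F G ihF ihG => simp [Fm.subst, Fm.occurs]; exact ⟨ihF, ihG⟩
  | disj F G ihF ihG => simp [Fm.subst, Fm.occurs]; exact ⟨ihF, ihG⟩

lemma Fm.not_occurs_subst {y : Nat} {f : Fm} (h : ¬ f.occurs y) (x : Nat) (v : Bool) :
    ¬ (f.subst x v).occurs y := by
  induction f with
  | var n =>
      simp only [Fm.subst]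
      split
      · cases v <;> simp [Fm.occurs]
      · simpa [Fm.occurs] using h
  | tru => simp [Fm.subst, Fm.occurs]
  | fls => simp [Fm.subst, Fm.occurs]
  | neg F ih => simp only [Fm.occurs] at h ⊢; exact ih h
  | conj F G ihF ihG =>
      simp only [Fm.subst, Fm.occurs] at h ⊢
      push_neg at h ⊢
      exact ⟨ihF h.1, ihG h.2⟩
  | disj F G ihF ihG =>
      simp only [Fm.subst, Fm.occurs] at h ⊢
      push_neg at h ⊢
      exact ⟨ihF h.1, ihG h.2⟩

lemma entails_of_mem {S : Set Fm} {f : Fm} (h : f ∈ S) : Entails S f :=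
  fun _ hσ => hσ f h

lemma entails_mono {S T : Set Fm} {f : Fm} (hST : S ⊆ T) (h : Entails S f) : Entails T f :=
  fun σ hσ => h σ (fun g hg => hσ g (hST hg))

lemma entails_trans {S T : Set Fm} {f : Fm} (hT : ∀ g ∈ T, Entails S g) (h : Entails T f) :
    Entails S f :=
  fun σ hσ => h σ (fun g hg => hT g hg σ hσ)

lemma ded_Th (S : Set Fm) : ∀ f, Entails (Th S) f → f ∈ Th S :=
  fun _ h => entails_trans (fun _ hg => hg) h

lemma mem_Th {S : Set Fm} {f : Fm} (h : f ∈ S) : f ∈ Th S := entails_of_mem h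

lemma dlclosed_univ (D : Set Default) (W E : Set Fm) : DLClosed D W E Set.univ :=
  ⟨fun _ _ => trivial, fun _ _ => trivial, fun _ _ _ _ => trivial⟩

lemma dlclosed_sInter (D : Set Default) (W E : Set Fm) :
    DLClosed D W E (⋂₀ {G | DLClosed D W E G}) := by
  refine ⟨?_, ?_, ?_⟩
  · intro w hw
    exact Set.mem_sInter.2 fun G hG => hG.1 hw
  · intro f hf
    exact Set.mem_sInter.2 fun G hG =>
      hG.2.1 f (entails_mono (Set.sInter_subset_of_mem hG) hf)
  · intro d hd hpre hjus
    exact Set.mem_sInter.2 fun G hG =>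
      hG.2.2 d hd (Set.mem_sInter.1 hpre G hG) hjus

lemma ext_closed {D : Set Default} {W E : Set Fm} (h : IsExtension D W E) :
    DLClosed D W E E := by
  have := dlclosed_sInter D W E
  rwa [← h] at this

lemma ext_subset {D : Set Default} {W E G : Set Fm} (h : IsExtension D W E)
    (hG : DLClosed D W E G) : E ⊆ G := by
  rw [h]
  exact Set.sInter_subset_of_mem hG

lemma ext_consistent {D : Set Default} {E : Set Fm} (h : IsExtension D ∅ E) :
    Fm.fls ∉ E := by
  intro hf
  have hall : ∀ f, f ∈ E := by
    intro f
    refine (ext_closed h).2.1 f (fun σ hσ => ?_)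
    have := hσ _ hf
    simp [Fm.eval] at this
  have hTh : DLClosed D ∅ E (Th ∅) :=
    ⟨by simp, ded_Th ∅, fun d _ _ hjus => absurd (hall _) hjus⟩
  have : Fm.fls ∈ Th (∅ : Set Fm) := ext_subset h hTh hf
  have := this (fun _ => true) (by simp)
  simp [Fm.eval] at this

end Aux


/-! ### Literals and the merging translation -/

/-- `lit x v` is `x` if `v = true`, `¬x` otherwise. -/
def lit (x : Nat) (v : Bool) : Fm := cond v (.var x) (.neg (.var x))

/-- The justification/consequent of the special defaults. -/
def jfm (x p : Nat) (v : Bool) : Fm := .conj (lit x v) (.var p)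

/-- The translation substituting `v` for `x` and `true` for `p`. -/
def tmap (x p : Nat) (v : Bool) (f : Fm) : Fm := (f.subst x v).subst p true

section Trans

variable {x p : Nat} {v : Bool}

lemma eval_lit (σ : Nat → Bool) : (lit x v).eval σ = true ↔ σ x = v := by
  cases v <;> simp [lit, Fm.eval]

lemma eval_subst_of {σ : Nat → Bool} (hx : σ x = v) (f : Fm) :
    (f.subst x v).eval σ = f.eval σ := by
  rw [Fm.eval_subst]
  exact Fm.eval_congr f (fun n _ => by split <;> simp_all)

lemma eval_tmap (σ : Nat → Bool) (f : Fm) :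
    (tmap x p v f).eval σ =
      f.eval (fun n => if n = x then v else if n = p then true else σ n) := by
  rw [tmap, Fm.eval_subst, Fm.eval_subst]

lemma eval_tmap_of {σ : Nat → Bool} (hx : σ x = v) (hp : σ p = true) (f : Fm) :
    (tmap x p v f).eval σ = f.eval σ := by
  rw [eval_tmap]
  exact Fm.eval_congr f (fun n _ => by split <;> [skip; split] <;> simp_all)

lemma tmap_eq_subst {f : Fm} (hpf : ¬ f.occurs p) : tmap x p v f = f.subst x v := by
  rw [tmap, Fm.subst_of_not_occurs (Fm.not_occurs_subst hpf x v)]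

lemma tmap_subst {f : Fm} (hpf : ¬ f.occurs p) : tmap x p v (f.subst x v) = f.subst x v := by
  rw [tmap, Fm.subst_of_not_occurs (Fm.not_occurs_subst_self x v f),
    Fm.subst_of_not_occurs (Fm.not_occurs_subst hpf x v)]

lemma tmap_id {f : Fm} (hxf : ¬ f.occurs x) (hpf : ¬ f.occurs p) : tmap x p v f = f := by
  rw [tmap, Fm.subst_of_not_occurs hxf, Fm.subst_of_not_occurs hpf]

lemma tmap_neg (f : Fm) : tmap x p v (.neg f) = .neg (tmap x p v f) := rfl

lemma entails_tmap' {S : Set Fm} {f : Fm} (h : Entails S f) :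
    Entails (tmap x p v '' S) (tmap x p v f) := by
  intro σ hσ
  rw [eval_tmap]
  refine h _ (fun g hg => ?_)
  rw [← eval_tmap]
  exact hσ _ ⟨g, hg, rfl⟩

lemma entails_tmap (hxp : x ≠ p) {S : Set Fm} {f : Fm}
    (h : Entails (S ∪ {lit x v, .var p}) f) :
    Entails (tmap x p v '' S) (tmap x p v f) := by
  intro σ hσ
  rw [eval_tmap]
  refine h _ (fun g hg => ?_)
  rcases hg with hg | hg
  · rw [← eval_tmap]
    exact hσ _ ⟨g, hg, rfl⟩
  · rcases hg with rfl | rfl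
    · rw [eval_lit]
      simp
    · show (if p = x then v else if p = p then true else σ p) = true
      simp [Ne.symm hxp]

lemma mem_iff_tmap {E : Set Fm} (hded : ∀ f, Entails E f → f ∈ E)
    (hl : lit x v ∈ E) (hpE : Fm.var p ∈ E) (f : Fm) :
    f ∈ E ↔ tmap x p v f ∈ E := by
  have key : ∀ σ : Nat → Bool, (∀ g ∈ E, g.eval σ = true) →
      (tmap x p v f).eval σ = f.eval σ := by
    intro σ hσ
    exact eval_tmap_of ((eval_lit σ).1 (hσ _ hl)) (hσ _ hpE) f
  constructor
  · intro hf
    exact hded _ (fun σ hσ => by rw [key σ hσ]; exact hσ f hf)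
  · intro hf
    exact hded _ (fun σ hσ => by rw [← key σ hσ]; exact hσ _ hf)

lemma eval_jfm (σ : Nat → Bool) (hx : σ x = v) (hp : σ p = true) :
    (jfm x p v).eval σ = true := by
  simp [jfm, Fm.eval, hp, (eval_lit σ).2 hx]

lemma eval_neg_jfm_other {σ : Nat → Bool} (hx : σ x = v) :
    (Fm.neg (jfm x p (!v))).eval σ = true := by
  have : (lit x (!v)).eval σ = false := by
    cases h : (lit x (!v)).eval σ
    · rfl
    · have := (eval_lit σ).1 h
      rw [hx] at this
      exact absurd this (by cases v <;> simp)
  simp [Fm.eval, jfm, this]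

end Trans


/-! ### Structural lemmas about the merged theory -/

@[simp] lemma Default.subst_pre (x : Nat) (v : Bool) (d : Default) :
    (Default.subst x v d).pre = d.pre.subst x v := rfl
@[simp] lemma Default.subst_jus (x : Nat) (v : Bool) (d : Default) :
    (Default.subst x v d).jus = d.jus.subst x v := rfl
@[simp] lemma Default.subst_con (x : Nat) (v : Bool) (d : Default) :
    (Default.subst x v d).con = d.con.subst x v := rfl

lemma tmap_conj (x p : Nat) (v : Bool) (f g : Fm) :
    tmap x p v (.conj f g) = .conj (tmap x p v f) (tmap x p v g) := rfl

lemma tmap_varp {x p : Nat} (hxp : x ≠ p) (v : Bool) : tmap x p v (.var p) = Fm.tru := by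
  simp [tmap, Fm.subst, (Ne.symm hxp : p ≠ x)]

lemma special_mem (D : Set Default) (x p : Nat) (v : Bool) :
    (⟨.tru, jfm x p v, jfm x p v⟩ : Default) ∈ mergedD D x p := by
  cases v
  · exact Set.mem_union_left _ (Set.mem_insert_of_mem _ rfl)
  · exact Set.mem_union_left _ (Set.mem_insert _ _)

lemma mem_merged (D : Set Default) (x p : Nat) {d : Default} (hd : d ∈ D) :
    (⟨.conj (.var p) d.pre, d.jus, d.con⟩ : Default) ∈ mergedD D x p :=
  Set.mem_union_right _ ⟨d, hd, rfl⟩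

lemma special_case {x p : Nat} {v w : Bool} {E G : Set Fm} (hjG : jfm x p v ∈ G)
    (hnE : Fm.neg (jfm x p (!v)) ∈ E) (hjus : Fm.neg (jfm x p w) ∉ E) : jfm x p w ∈ G := by
  by_cases hwv : w = v
  · subst hwv; exact hjG
  · have hw : w = !v := by cases w <;> cases v <;> simp_all
    rw [hw] at hjus
    exact absurd hnE hjus

/-- The least closed set of a substituted theory is closed under the translation. -/
lemma tmap_closed_sInter (D : Set Default) (x p : Nat) (v : Bool)
    (hp : ∀ d ∈ D, ¬ d.occurs p) (E' : Set Fm) {f : Fm}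
    (hf : f ∈ ⋂₀ {G | DLClosed ((Default.subst x v) '' D) ∅ E' G}) :
    tmap x p v f ∈ ⋂₀ {G | DLClosed ((Default.subst x v) '' D) ∅ E' G} := by
  refine Set.mem_sInter.2 (fun G hG => ?_)
  have hGt : DLClosed ((Default.subst x v) '' D) ∅ E' {g | tmap x p v g ∈ G} := by
    refine ⟨by simp, ?_, ?_⟩
    · intro g hg
      refine hG.2.1 _ (entails_mono ?_ (entails_tmap' hg))
      rintro _ ⟨h, hh, rfl⟩
      exact hh
    · rintro d' ⟨d, hd, rfl⟩ hpre hjus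
      have hppre : ¬ d.pre.occurs p := fun hh => hp d hd (Or.inl hh)
      have hpcon : ¬ d.con.occurs p := fun hh => hp d hd (Or.inr (Or.inr hh))
      have hpre' : (Default.subst x v d).pre ∈ G := by
        have := hpre
        simp only [Set.mem_setOf_eq, Default.subst_pre, tmap_subst hppre] at this
        exact this
      have hcon : (Default.subst x v d).con ∈ G := hG.2.2 _ ⟨d, hd, rfl⟩ hpre' hjus
      simp only [Set.mem_setOf_eq, Default.subst_con, tmap_subst hpcon]
      exact hcon
  exact Set.mem_sInter.1 hf _ hGt

/-! ### Forward direction -/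

lemma forward_case (D : Set Default) (x p : Nat) (hxp : x ≠ p)
    (hp : ∀ d ∈ D, ¬ d.occurs p) (v : Bool) (E : Set Fm)
    (hE : IsExtension (mergedD D x p) ∅ E)
    (hA : Fm.neg (jfm x p v) ∉ E) :
    ∃ E₀, IsExtension ((Default.subst x v) '' D) ∅ E₀ ∧
      E = Th (E₀ ∪ {lit x v, .var p}) := by
  have hEc : DLClosed (mergedD D x p) ∅ E E := ext_closed hE
  have hded := hEc.2.1
  have htru : Fm.tru ∈ E := hded _ (fun σ _ => rfl)
  have hjv : jfm x p v ∈ E := hEc.2.2 _ (special_mem D x p v) htru hA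
  have hlit : lit x v ∈ E := hded _ (fun σ hσ => by
    have := hσ _ hjv
    simp only [jfm, Fm.eval, Bool.and_eq_true] at this
    exact this.1)
  have hpE : Fm.var p ∈ E := hded _ (fun σ hσ => by
    have := hσ _ hjv
    simp only [jfm, Fm.eval, Bool.and_eq_true] at this
    exact this.2)
  have hnj' : Fm.neg (jfm x p (!v)) ∈ E :=
    hded _ (fun σ hσ => eval_neg_jfm_other ((eval_lit σ).1 (hσ _ hlit)))
  set E₀ := ⋂₀ {G | DLClosed ((Default.subst x v) '' D) ∅ E G} with hE₀def
  have hE₀c : DLClosed ((Default.subst x v) '' D) ∅ E E₀ := dlclosed_sInter _ _ _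
  have hE₀ded := hE₀c.2.1
  have hmemt := mem_iff_tmap hded hlit hpE
  -- justification transfer between a default and its substituted form, inside E
  have hjusE : ∀ d ∈ D, (Fm.neg d.jus ∈ E ↔ Fm.neg (d.jus.subst x v) ∈ E) := by
    intro d hd
    have hpj : ¬ d.jus.occurs p := fun hh => hp d hd (Or.inr (Or.inl hh))
    have e1 : tmap x p v (.neg d.jus) = .neg (d.jus.subst x v) := by
      rw [tmap_neg, tmap_eq_subst hpj]
    have := hmemt (Fm.neg d.jus)
    rwa [e1] at this
  -- Step 1 : E is closed for the substituted theory relative to E, hence E₀ ⊆ E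
  have hEDv : DLClosed ((Default.subst x v) '' D) ∅ E E := by
    refine ⟨by simp, hded, ?_⟩
    rintro d' ⟨d, hd, rfl⟩ hpre hjus
    simp only [Default.subst_pre, Default.subst_jus, Default.subst_con] at hpre hjus ⊢
    have hpreE : Fm.conj (.var p) d.pre ∈ E := hded _ (fun σ hσ => by
      have h1 := hσ _ hpre
      rw [eval_subst_of ((eval_lit σ).1 (hσ _ hlit))] at h1
      have h2 := hσ _ hpE
      simp only [Fm.eval] at h2 ⊢
      simp [h1, h2])
    have hjusE' : Fm.neg d.jus ∉ E := fun h => hjus ((hjusE d hd).1 h)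
    have hcon : d.con ∈ E := hEc.2.2 ⟨.conj (.var p) d.pre, d.jus, d.con⟩ (mem_merged D x p hd) hpreE hjusE'
    exact hded _ (fun σ hσ => by
      rw [eval_subst_of ((eval_lit σ).1 (hσ _ hlit))]
      exact hσ _ hcon)
  have hE₀E : E₀ ⊆ E := Set.sInter_subset_of_mem hEDv
  -- Step 3 : E₀ is closed under the translation
  have htcl : ∀ f ∈ E₀, tmap x p v f ∈ E₀ := fun f hf =>
    tmap_closed_sInter D x p v hp E hf
  have hreduce : ∀ f, Entails (E₀ ∪ {lit x v, .var p}) f → tmap x p v f ∈ E₀ := by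
    intro f hf
    refine hE₀ded _ (entails_mono ?_ (entails_tmap hxp hf))
    rintro _ ⟨g, hg, rfl⟩
    exact htcl g hg
  have hlitmem : lit x v ∈ E₀ ∪ {lit x v, .var p} :=
    Set.mem_union_right _ (Set.mem_insert _ _)
  have hpmem : Fm.var p ∈ E₀ ∪ {lit x v, .var p} :=
    Set.mem_union_right _ (Set.mem_insert_of_mem _ rfl)
  have hjG : jfm x p v ∈ Th (E₀ ∪ {lit x v, .var p}) := by
    show Entails _ _
    intro σ hσ
    exact eval_jfm σ ((eval_lit σ).1 (hσ _ hlitmem)) (hσ _ hpmem)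
  -- Step 4 : Th (E₀ ∪ {lit, p}) is closed for the merged theory relative to E
  have hGstar : DLClosed (mergedD D x p) ∅ E (Th (E₀ ∪ {lit x v, .var p})) := by
    refine ⟨by simp, ded_Th _, ?_⟩
    rintro d' hd' hpre hjus
    rcases hd' with hd' | ⟨d, hd, rfl⟩
    · rcases hd' with rfl | rfl
      · exact special_case (w := true) hjG hnj' hjus
      · exact special_case (w := false) hjG hnj' hjus
    · simp only at hpre hjus ⊢
      have hppre : ¬ d.pre.occurs p := fun hh => hp d hd (Or.inl hh)
      have hjv' : Fm.neg (d.jus.subst x v) ∉ E := fun h => hjus ((hjusE d hd).2 h)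
      have hjv₀ : Fm.neg (d.jus.subst x v) ∉ E₀ := fun h => hjv' (hE₀E h)
      have hpre₀ : d.pre.subst x v ∈ E₀ := by
        have h1 := hreduce _ hpre
        rw [tmap_conj, tmap_varp hxp, tmap_eq_subst hppre] at h1
        refine hE₀ded _ (fun σ hσ => ?_)
        have := hσ _ h1
        simpa [Fm.eval] using this
      have hcon' : d.con.subst x v ∈ E₀ := hE₀c.2.2 _ ⟨d, hd, rfl⟩ hpre₀ hjv'
      show Entails _ _
      intro σ hσ
      have := hσ _ (Or.inl hcon')
      rwa [eval_subst_of ((eval_lit σ).1 (hσ _ hlitmem))] at this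
  -- Step 5 : E = Th (E₀ ∪ {lit, p})
  have hEeq : E = Th (E₀ ∪ {lit x v, .var p}) := by
    refine Set.Subset.antisymm (ext_subset hE hGstar) ?_
    intro f hf
    refine hded f (entails_trans ?_ hf)
    rintro g (hg | hg)
    · exact entails_of_mem (hE₀E hg)
    · rcases hg with rfl | rfl
      · exact entails_of_mem hlit
      · exact entails_of_mem hpE
  -- Step 6 : justification membership agrees between E and E₀
  have hjus₀ : ∀ d ∈ D,
      (Fm.neg (d.jus.subst x v) ∈ E ↔ Fm.neg (d.jus.subst x v) ∈ E₀) := by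
    intro d hd
    have hpj : ¬ d.jus.occurs p := fun hh => hp d hd (Or.inr (Or.inl hh))
    constructor
    · intro h
      rw [hEeq] at h
      have := hreduce _ h
      rwa [tmap_neg, tmap_subst hpj] at this
    · exact fun h => hE₀E h
  -- Step 7 : the closed families relative to E and to E₀ coincide
  have hfam : {G | DLClosed ((Default.subst x v) '' D) ∅ E G} =
      {G | DLClosed ((Default.subst x v) '' D) ∅ E₀ G} := by
    ext G
    simp only [Set.mem_setOf_eq, DLClosed]
    constructor <;> rintro ⟨h1, h2, h3⟩ <;> refine ⟨h1, h2, ?_⟩ <;>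
      rintro d' ⟨d, hd, rfl⟩ hpre hjus
    · exact h3 _ ⟨d, hd, rfl⟩ hpre (fun h => hjus ((hjus₀ d hd).1 h))
    · exact h3 _ ⟨d, hd, rfl⟩ hpre (fun h => hjus ((hjus₀ d hd).2 h))
  refine ⟨E₀, ?_, hEeq⟩
  show E₀ = _
  rw [← hfam]

/-! ### Backward direction -/

lemma backward_case (D : Set Default) (x p : Nat) (hxp : x ≠ p)
    (hp : ∀ d ∈ D, ¬ d.occurs p) (v : Bool) (E₀ : Set Fm)
    (h0 : IsExtension ((Default.subst x v) '' D) ∅ E₀) :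
    IsExtension (mergedD D x p) ∅ (Th (E₀ ∪ {lit x v, .var p})) := by
  set E := Th (E₀ ∪ {lit x v, .var p}) with hEdef
  have h0c : DLClosed ((Default.subst x v) '' D) ∅ E₀ E₀ := ext_closed h0
  have h0ded := h0c.2.1
  have htcl : ∀ f ∈ E₀, tmap x p v f ∈ E₀ := by
    intro f hf
    rw [h0] at hf ⊢
    exact tmap_closed_sInter D x p v hp E₀ hf
  have hlitmem : lit x v ∈ E₀ ∪ {lit x v, .var p} :=
    Set.mem_union_right _ (Set.mem_insert _ _)
  have hpmem : Fm.var p ∈ E₀ ∪ {lit x v, .var p} :=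
    Set.mem_union_right _ (Set.mem_insert_of_mem _ rfl)
  have hlit : lit x v ∈ E := mem_Th hlitmem
  have hpE : Fm.var p ∈ E := mem_Th hpmem
  have hE₀E : E₀ ⊆ E := fun f hf => mem_Th (Or.inl hf)
  have hded : ∀ f, Entails E f → f ∈ E := ded_Th _
  have hreduce : ∀ f, f ∈ E → tmap x p v f ∈ E₀ := by
    intro f hf
    refine h0ded _ (entails_mono ?_ (entails_tmap hxp hf))
    rintro _ ⟨g, hg, rfl⟩
    exact htcl g hg
  have hfree : ∀ f, ¬ f.occurs x → ¬ f.occurs p → (f ∈ E ↔ f ∈ E₀) := by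
    intro f hfx hfp
    refine ⟨fun h => ?_, fun h => hE₀E h⟩
    have := hreduce f h
    rwa [tmap_id hfx hfp] at this
  have hcons : Fm.fls ∉ E₀ := ext_consistent h0
  -- consistency of E with the literal: the special justification is not blocked
  have hA : Fm.neg (jfm x p v) ∉ E := by
    intro h
    have hsat : ∃ σ, ∀ g ∈ E₀, g.eval σ = true := by
      by_contra hns
      push_neg at hns
      refine hcons (h0ded _ (fun σ hσ => ?_))
      obtain ⟨g, hg, hne⟩ := hns σ
      exact absurd (hσ g hg) hne
    obtain ⟨σ, hσ⟩ := hsat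
    set σ' := fun n => if n = x then v else if n = p then true else σ n with hσ'def
    have hσ'x : σ' x = v := by simp [hσ'def]
    have hσ'p : σ' p = true := by simp [hσ'def, (Ne.symm hxp : p ≠ x)]
    have hσ'E : ∀ g ∈ E₀ ∪ {lit x v, .var p}, g.eval σ' = true := by
      rintro g (hg | hg)
      · have := hσ _ (htcl g hg)
        rwa [eval_tmap] at this
      · rcases hg with rfl | rfl
        · exact (eval_lit σ').2 hσ'x
        · exact hσ'p
    have h1 := h σ' hσ'E
    have h2 := eval_jfm σ' hσ'x hσ'p
    simp only [jfm, Fm.eval] at h1 h2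
    simp [h2] at h1
  have hjvE : jfm x p v ∈ E :=
    hded _ (fun σ hσ => eval_jfm σ ((eval_lit σ).1 (hσ _ hlit)) (hσ _ hpE))
  have hnj' : Fm.neg (jfm x p (!v)) ∈ E :=
    hded _ (fun σ hσ => eval_neg_jfm_other ((eval_lit σ).1 (hσ _ hlit)))
  have hmemt := mem_iff_tmap hded hlit hpE
  have hjusEq : ∀ d ∈ D, (Fm.neg d.jus ∈ E ↔ Fm.neg (d.jus.subst x v) ∈ E₀) := by
    intro d hd
    have hpj : ¬ d.jus.occurs p := fun hh => hp d hd (Or.inr (Or.inl hh))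
    have e1 : tmap x p v (.neg d.jus) = .neg (d.jus.subst x v) := by
      rw [tmap_neg, tmap_eq_subst hpj]
    have h1 := hmemt (Fm.neg d.jus)
    rw [e1] at h1
    refine h1.trans (hfree _ ?_ ?_)
    · exact Fm.not_occurs_subst_self x v d.jus
    · exact Fm.not_occurs_subst hpj x v
  -- E is closed for the merged theory relative to itself
  have hEc : DLClosed (mergedD D x p) ∅ E E := by
    refine ⟨by simp, hded, ?_⟩
    rintro d' hd' hpre hjus
    rcases hd' with hd' | ⟨d, hd, rfl⟩
    · rcases hd' with rfl | rfl
      · exact special_case (w := true) hjvE hnj' hjus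
      · exact special_case (w := false) hjvE hnj' hjus
    · simp only at hpre hjus ⊢
      have hppre : ¬ d.pre.occurs p := fun hh => hp d hd (Or.inl hh)
      have hjus₀ : Fm.neg (d.jus.subst x v) ∉ E₀ := fun h => hjus ((hjusEq d hd).2 h)
      have hpre₀ : d.pre.subst x v ∈ E₀ := by
        have h1 := hreduce _ hpre
        rw [tmap_conj, tmap_varp hxp, tmap_eq_subst hppre] at h1
        refine h0ded _ (fun σ hσ => ?_)
        have := hσ _ h1
        simpa [Fm.eval] using this
      have hcon' : d.con.subst x v ∈ E₀ := h0c.2.2 _ ⟨d, hd, rfl⟩ hpre₀ hjus₀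
      refine hded _ (fun σ hσ => ?_)
      have := hσ _ (hE₀E hcon')
      rwa [eval_subst_of ((eval_lit σ).1 (hσ _ hlit))] at this
  -- the least closed set contains E
  set Λ := ⋂₀ {G | DLClosed (mergedD D x p) ∅ E G} with hΛdef
  have hΛc : DLClosed (mergedD D x p) ∅ E Λ := dlclosed_sInter _ _ _
  have htruΛ : Fm.tru ∈ Λ := hΛc.2.1 _ (fun σ _ => rfl)
  have hjvΛ : jfm x p v ∈ Λ := hΛc.2.2 _ (special_mem D x p v) htruΛ hA
  have hlitΛ : lit x v ∈ Λ := hΛc.2.1 _ (fun σ hσ => by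
    have := hσ _ hjvΛ
    simp only [jfm, Fm.eval, Bool.and_eq_true] at this
    exact this.1)
  have hpΛ : Fm.var p ∈ Λ := hΛc.2.1 _ (fun σ hσ => by
    have := hσ _ hjvΛ
    simp only [jfm, Fm.eval, Bool.and_eq_true] at this
    exact this.2)
  have hΛDv : DLClosed ((Default.subst x v) '' D) ∅ E₀ Λ := by
    refine ⟨by simp, hΛc.2.1, ?_⟩
    rintro d' ⟨d, hd, rfl⟩ hpre hjus
    simp only [Default.subst_pre, Default.subst_jus, Default.subst_con] at hpre hjus ⊢
    have hjE : Fm.neg d.jus ∉ E := fun h => hjus ((hjusEq d hd).1 h)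
    have hpreΛ : Fm.conj (.var p) d.pre ∈ Λ := hΛc.2.1 _ (fun σ hσ => by
      have h1 := hσ _ hpre
      rw [eval_subst_of ((eval_lit σ).1 (hσ _ hlitΛ))] at h1
      have h2 := hσ _ hpΛ
      simp only [Fm.eval] at h2 ⊢
      simp [h1, h2])
    have hconΛ : d.con ∈ Λ := hΛc.2.2 ⟨.conj (.var p) d.pre, d.jus, d.con⟩ (mem_merged D x p hd) hpreΛ hjE
    refine hΛc.2.1 _ (fun σ hσ => ?_)
    rw [eval_subst_of ((eval_lit σ).1 (hσ _ hlitΛ))]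
    exact hσ _ hconΛ
  have hE₀Λ : E₀ ⊆ Λ := by
    rw [h0]
    exact Set.sInter_subset_of_mem hΛDv
  have hsub : E ⊆ Λ := by
    intro f hf
    refine hΛc.2.1 f (entails_trans ?_ hf)
    rintro g (hg | hg)
    · exact entails_of_mem (hE₀Λ hg)
    · rcases hg with rfl | rfl
      · exact entails_of_mem hlitΛ
      · exact entails_of_mem hpΛ
  exact Set.Subset.antisymm hsub (Set.sInter_subset_of_mem hEc)


lemma both_blocked {D : Set Default} {x p : Nat} {E : Set Fm}
    (hE : IsExtension (mergedD D x p) ∅ E)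
    (h1 : Fm.neg (jfm x p true) ∈ E) (h2 : Fm.neg (jfm x p false) ∈ E) : False := by
  have hTh : DLClosed (mergedD D x p) ∅ E (Th ∅) := by
    refine ⟨by simp, ded_Th _, ?_⟩
    rintro d' hd' hpre hjus
    rcases hd' with hd' | ⟨d, hd, rfl⟩
    · rcases hd' with rfl | rfl
      · exact absurd h1 hjus
      · exact absurd h2 hjus
    · exfalso
      have hpre' : Entails ∅ (Fm.conj (.var p) d.pre) := hpre
      have := hpre' (fun _ => false) (by simp)
      simp [Fm.eval] at this
  have h3 : Entails ∅ (Fm.neg (jfm x p true)) := ext_subset hE hTh h1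
  have := h3 (fun _ => true) (by simp)
  simp [jfm, lit, Fm.eval] at this

/-- merging lemma for default logic: the extensions of the merged
theory are exactly the extensions of `⟨D|_{x=true}, ∅⟩` with `x` and `p` added
to each, together with the extensions of `⟨D|_{x=false}, ∅⟩` with `¬x` and `p`
added to each. -/
theorem default_merging_lemma (D : Set Default) (x p : Nat) (hxp : x ≠ p)
    (hp : ∀ d ∈ D, ¬ d.occurs p) :
    ∀ E, IsExtension (mergedD D x p) ∅ E ↔
      ((∃ E₀, IsExtension ((Default.subst x true) '' D) ∅ E₀ ∧
          E = Th (E₀ ∪ {.var x, .var p})) ∨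
       (∃ E₀, IsExtension ((Default.subst x false) '' D) ∅ E₀ ∧
          E = Th (E₀ ∪ {.neg (.var x), .var p}))) := by
  intro E
  constructor
  · intro hE
    by_cases h1 : Fm.neg (jfm x p true) ∈ E
    · by_cases h2 : Fm.neg (jfm x p false) ∈ E
      · exact (both_blocked hE h1 h2).elim
      · exact Or.inr (forward_case D x p hxp hp false E hE h2)
    · exact Or.inl (forward_case D x p hxp hp true E hE h1)
  · rintro (⟨E₀, h0, rfl⟩ | ⟨E₀, h0, rfl⟩)
    · exact backward_case D x p hxp hp true E₀ h0
    · exact backward_case D x p hxp hp false E₀ h0
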